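/- Let G be a countable locally finite group, A a finite alphabet, X ⊆ A^G a nonempty G-SFT, and {F_n} a Følner sequence for G. If log|L_{F_n}(X)| / |F_n| → 0 as n → ∞ (i.e., X has zero topological entropy), then X = {x} for a single configuration x which is a fixed point: σ^g x = x for all g ∈ G. -/

import Mathlib

open scoped Pointwise symmDiff

namespace LFPaper

variable {G A B : Type*}

/-- The right shift action: `(shift g x) h = x (h * g)`. -/
def shift [Group G] (g : G) (x : G → A) : G → A := fun h => x (h * g)

/-- Restriction of a configuration to a finite shape. -/
def restrictF (F : Finset G) (x : G → A) : F → A := fun a => x a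

/-- A `G`-shift space: a closed, shift-invariant subset of the full shift. -/
def IsShiftSpace [Group G] [TopologicalSpace A] (X : Set (G → A)) : Prop :=
  IsClosed X ∧ ∀ g : G, ∀ x ∈ X, shift g x ∈ X

/-- A `G`-shift of finite type: the set of configurations avoiding a finite
set of forbidden patterns on a finite shape. -/
def IsSFT [Group G] (X : Set (G → A)) : Prop :=
  ∃ (F : Finset G) (P : Set (F → A)),
    X = {x : G → A | ∀ g : G, restrictF F (shift g x) ∉ P}

/-- The `F`-language of `X`: all restrictions of elements of `X` to `F`. -/
def language (X : Set (G → A)) (F : Finset G) : Set (F → A) :=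
  {w | ∃ x ∈ X, restrictF F x = w}

/-- Strong irreducibility of a shift. -/
def StronglyIrreducible [Group G] (X : Set (G → A)) : Prop :=
  ∃ K : Finset G, ∀ (Fu Fv : Finset G) (u : Fu → A) (v : Fv → A),
    Disjoint (Fu : Set G) ((K : Set G) * (Fv : Set G)) →
    u ∈ language X Fu → v ∈ language X Fv →
    ∃ x ∈ X, restrictF Fu x = u ∧ restrictF Fv x = v

/-- The free `G`-extension of an `H`-shift `Y`: all configurations whose
restriction to every right coset of `H` (pulled back to `H`) lies in `Y`. -/
def freeExt [Group G] (H : Subgroup G) (Y : Set (H → A)) : Set (G → A) :=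
  {x : G → A | ∀ g : G, (fun h : H => x ((h : G) * g)) ∈ Y}

/-- Local finiteness of a group: every finitely generated subgroup is finite. -/
def IsLocallyFinite (G : Type*) [Group G] : Prop :=
  ∀ S : Finset G, Finite ↥(Subgroup.closure (S : Set G))

/-- A (left) Følner sequence for a countable group. -/
def IsFolner [Group G] (F : ℕ → Finset G) : Prop :=
  (∀ n, (F n).Nonempty) ∧ (∀ g : G, ∃ n, g ∈ F n) ∧
  ∀ g : G, Filter.Tendsto
    (fun n => (Set.ncard ((((fun h => g * h) '' (F n : Set G))) ∆ ((F n : Set G))) : ℝ) /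
      ((F n).card : ℝ))
    Filter.atTop (nhds 0)

/-- Cardinality of the `F`-language. -/
noncomputable def langCard (X : Set (G → A)) (F : Finset G) : ℕ :=
  (language X F).ncard

/-- A shift-commuting self-homeomorphism of `X` (an automorphism of the shift `X`). -/
def IsAutomorphism [Group G] [TopologicalSpace A] (X : Set (G → A)) (φ : Equiv.Perm X) : Prop :=
  Continuous φ ∧ Continuous φ.symm ∧
  ∀ (g : G) (x y : X), (y : G → A) = shift g (x : G → A) →
    (φ y : G → A) = shift g ((φ x : G → A))

/-- Over a countable locally finite group, a nonempty `G`-SFT with zero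
topological entropy is a single fixed point. -/
theorem zero_entropy_SFT_is_fixed_point [Group G] [Countable G] (hLF : IsLocallyFinite G)
    [Fintype A] [Nonempty A] (X : Set (G → A)) (hX : IsSFT X) (hne : X.Nonempty)
    (F : ℕ → Finset G) (hF : IsFolner F)
    (hent : Filter.Tendsto
      (fun n => Real.log (langCard X (F n)) / ((F n).card : ℝ)) Filter.atTop (nhds 0)) :
    ∃ x : G → A, X = {x} ∧ ∀ g : G, shift g x = x := by
  classical
  obtain ⟨F₀, P, hXP⟩ := hX
  have hshift : ∀ g : G, ∀ y ∈ X, shift g y ∈ X := by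
    intro g y hy
    rw [hXP] at hy ⊢
    intro g'
    have h := hy (g' * g)
    have he : restrictF F₀ (shift g' (shift g y)) = restrictF F₀ (shift (g' * g) y) := by
      funext f
      simp [shift, restrictF, mul_assoc]
    rw [he]
    exact h
  have huniq : ∀ x ∈ X, ∀ x' ∈ X, x = x' := by
    by_contra hcon
    push_neg at hcon
    obtain ⟨x, hx, x', hx', hxx'⟩ := hcon
    have hxP : ∀ g, restrictF F₀ (shift g x) ∉ P := by rw [hXP] at hx; exact hx
    have hx'P : ∀ g, restrictF F₀ (shift g x') ∉ P := by rw [hXP] at hx'; exact hx'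
    obtain ⟨g₀, hg₀⟩ := Function.ne_iff.mp hxx'
    set H := Subgroup.closure (F₀ : Set G) with hH
    haveI : Finite H := hLF F₀
    have hF₀H : ∀ f : F₀, (f : G) ∈ H := fun f => Subgroup.subset_closure f.2
    set HS : Finset G := Set.Finite.toFinset (Set.toFinite (H : Set G)) with hHS
    set m := HS.card with hm
    have hm1 : 1 ≤ m := Finset.card_pos.mpr ⟨1, by simp only [hHS, Set.Finite.mem_toFinset, SetLike.mem_coe]; exact one_mem H⟩
    set q : G → Quotient (QuotientGroup.rightRel H) := Quotient.mk _ with hqdef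
    have hq_mul : ∀ (f g : G), f ∈ H → q (f * g) = q g := by
      intro f g hf
      apply Quotient.sound
      have h1 : g * (f * g)⁻¹ = f⁻¹ := by group
      show QuotientGroup.rightRel H (f * g) g
      rw [QuotientGroup.rightRel_apply, h1]
      exact inv_mem hf
    have hlow : ∀ n, Real.log 2 / (m : ℝ) ≤
        Real.log (langCard X (F n)) / ((F n).card : ℝ) := by
      intro n
      set T : Finset (Quotient (QuotientGroup.rightRel H)) := (F n).image q with hT
      have hTne : T.Nonempty := (hF.1 n).image q
      let ρ : Quotient (QuotientGroup.rightRel H) → G := fun C =>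
        if h : ∃ g ∈ F n, q g = C then h.choose else C.out
      have hρq : ∀ C, q (ρ C) = C := by
        intro C
        by_cases h : ∃ g ∈ F n, q g = C
        · simp only [ρ, dif_pos h]; exact h.choose_spec.2
        · simp only [ρ, dif_neg h]; exact Quotient.out_eq C
      have hρF : ∀ C ∈ T, ρ C ∈ F n := by
        intro C hC
        have h : ∃ g ∈ F n, q g = C := Finset.mem_image.mp hC
        simp only [ρ, dif_pos h]; exact h.choose_spec.1
      set xc : (Quotient (QuotientGroup.rightRel H) → Bool) → G → A := fun b k =>
        (if b (q k) then x else x') (k * (ρ (q k))⁻¹ * g₀) with hxc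
      have hxcX : ∀ b, xc b ∈ X := by
        intro b
        rw [hXP]
        intro g
        have he : restrictF F₀ (shift g (xc b)) =
            restrictF F₀ (shift (g * (ρ (q g))⁻¹ * g₀) (if b (q g) then x else x')) := by
          funext f
          have hq1 : q ((f : G) * g) = q g := hq_mul f g (hF₀H f)
          have hassoc : ((f : G) * g) * (ρ (q g))⁻¹ * g₀ = (f : G) * (g * (ρ (q g))⁻¹ * g₀) := by
            group
          simp only [restrictF, shift, hxc, hq1, hassoc]
        rw [he]
        by_cases hb : b (q g) <;> simp only [hb, if_true, if_false]
        · exact hxP _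
        · exact hx'P _
      have hval : ∀ b, xc b (ρ (q g₀)) = (if b (q g₀) then x else x') g₀ := by
        intro b
        have h2 : ρ (q g₀) * (ρ (q g₀))⁻¹ * g₀ = g₀ := by group
        simp only [hxc, hρq, h2]
      have hvalC : ∀ (b : Quotient (QuotientGroup.rightRel H) → Bool) (C), C ∈ T →
          xc b (ρ C) = (if b C then x else x') g₀ := by
        intro b C _
        have h2 : ρ C * (ρ C)⁻¹ * g₀ = g₀ := by group
        simp only [hxc, hρq, h2]
      let Φ : (↥T → Bool) → ↥(language X (F n)) := fun c =>
        ⟨restrictF (F n) (xc (fun C => if h : C ∈ T then c ⟨C, h⟩ else false)),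
          ⟨xc (fun C => if h : C ∈ T then c ⟨C, h⟩ else false),
            hxcX (fun C => if h : C ∈ T then c ⟨C, h⟩ else false), rfl⟩⟩
      have hΦinj : Function.Injective Φ := by
        intro c₁ c₂ hc
        funext ⟨C, hC⟩
        have heq := congrArg Subtype.val hc
        have hv := congrFun heq ⟨ρ C, hρF C hC⟩
        simp only [Φ, restrictF] at hv
        rw [hvalC (fun C => if h : C ∈ T then c₁ ⟨C, h⟩ else false) C hC,
          hvalC (fun C => if h : C ∈ T then c₂ ⟨C, h⟩ else false) C hC] at hv
        simp only [dif_pos hC] at hv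
        by_cases h1 : c₁ ⟨C, hC⟩ <;> by_cases h2 : c₂ ⟨C, hC⟩ <;>
          simp only [h1, h2, if_true, if_false] at hv ⊢
        · exact absurd hv hg₀
        · exact absurd hv.symm hg₀
      have hcard1 : 2 ^ T.card ≤ langCard X (F n) := by
        have h1 : Nat.card (↥T → Bool) ≤ Nat.card ↥(language X (F n)) :=
          Nat.card_le_card_of_injective Φ hΦinj
        have h2 : Nat.card Bool = 2 := by simp [Nat.card_eq_fintype_card]
        rwa [Nat.card_fun, Nat.card_eq_finsetCard, h2, Nat.card_coe_set_eq] at h1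
      have hcard2 : (F n).card ≤ m * T.card := by
        apply Finset.card_le_mul_card_image
        intro C hC
        apply Finset.card_le_card_of_injOn (fun k => ρ C * k⁻¹)
        · intro k hk
          simp only [Finset.mem_coe, Finset.mem_filter] at hk
          have hmem : ρ C * k⁻¹ ∈ H := by
            have hex : q k = q (ρ C) := hk.2.trans (hρq C).symm
            have := Quotient.exact hex
            rwa [← QuotientGroup.rightRel_apply]
          simp only [hHS, Finset.mem_coe, Set.Finite.mem_toFinset, SetLike.mem_coe]
          exact hmem
        · intro k₁ _ k₂ _ h
          have : k₁⁻¹ = k₂⁻¹ := mul_left_cancel h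
          exact inv_injective this
      have hT1 : 1 ≤ T.card := Finset.card_pos.mpr hTne
      have hF1 : 0 < ((F n).card : ℝ) := by
        exact_mod_cast Finset.card_pos.mpr (hF.1 n)
      have hm0 : (0 : ℝ) < m := by exact_mod_cast hm1
      rw [div_le_div_iff₀ hm0 hF1]
      have hlog1 : (T.card : ℝ) * Real.log 2 ≤ Real.log (langCard X (F n)) := by
        rw [← Real.log_pow]
        apply Real.log_le_log (by positivity)
        exact_mod_cast hcard1
      calc Real.log 2 * ((F n).card : ℝ) ≤ Real.log 2 * ((m : ℝ) * T.card) := by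
            have := Real.log_nonneg (by norm_num : (1:ℝ) ≤ 2)
            apply mul_le_mul_of_nonneg_left _ this
            exact_mod_cast hcard2
        _ = ((T.card : ℝ) * Real.log 2) * m := by ring
        _ ≤ Real.log (langCard X (F n)) * m := by
            apply mul_le_mul_of_nonneg_right hlog1 (le_of_lt hm0)
    have hc0 : Real.log 2 / (m : ℝ) ≤ 0 := ge_of_tendsto' hent hlow
    have : (0 : ℝ) < Real.log 2 / (m : ℝ) := by
      apply div_pos (Real.log_pos (by norm_num))
      exact_mod_cast hm1
    linarith
  obtain ⟨x₀, hx₀⟩ := hne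
  refine ⟨x₀, ?_, ?_⟩
  · exact Set.eq_singleton_iff_unique_mem.mpr ⟨hx₀, fun y hy => huniq y hy x₀ hx₀⟩
  · intro g
    exact huniq _ (hshift g x₀ hx₀) x₀ hx₀

end LFPaper
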